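/- Let T be a bounded operator on a Hilbert space H with ‖Tx‖ ≥ ‖x‖ for all x, and let 0 < ε < 1. Then the closed linear span of the kernels ker(T*ⁿ) for n ≥ 1 equals the closed linear span of the eigenspaces ker(T* - λ̄) over all λ with |λ| < ε. -/

import Mathlib

open ContinuousLinearMap

set_option linter.unusedSectionVars false

section Aux

variable {H : Type*} [NormedAddCommGroup H] [InnerProductSpace ℂ H] [CompleteSpace H]

local notation "⟪" x ", " y "⟫" => @inner ℂ _ _ x y

private lemma orth_iSup' {ι : Sort*} (K : ι → Submodule ℂ H) :
    (⨆ i, K i)ᗮ = ⨅ i, (K i)ᗮ :=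
  (Submodule.orthogonal_gc ℂ H).l_iSup

private lemma ker_adjoint' (A : H →L[ℂ] H) :
    LinearMap.ker (adjoint A : H →ₗ[ℂ] H) = (LinearMap.range (A : H →ₗ[ℂ] H))ᗮ := by
  ext x
  simp only [LinearMap.mem_ker, Submodule.mem_orthogonal, ContinuousLinearMap.coe_coe]
  constructor
  · rintro h u ⟨y, rfl⟩
    rw [ContinuousLinearMap.coe_coe, ← adjoint_inner_right, h, inner_zero_right]
  · intro h
    have : ⟪adjoint A x, adjoint A x⟫ = 0 := by
      rw [adjoint_inner_right]
      exact h _ ⟨adjoint A x, rfl⟩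
    exact inner_self_eq_zero.mp this

private lemma range_closed' {A : H →L[ℂ] H} {c : ℝ} (hc : 0 < c)
    (h : ∀ x, c * ‖x‖ ≤ ‖A x‖) : IsClosed (LinearMap.range (A : H →ₗ[ℂ] H) : Set H) := by
  have ha : AntilipschitzWith (⟨c, hc.le⟩ : NNReal)⁻¹ A :=
    A.antilipschitz_of_bound fun x => by
      have hx := h x
      change ‖x‖ ≤ c⁻¹ * ‖A x‖
      rw [inv_mul_eq_div, le_div_iff₀ hc]
      linarith
  have := ha.isClosed_range A.uniformContinuous
  simpa [LinearMap.coe_range] using this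

private lemma pow_lower' (T : H →L[ℂ] H) (hT : ∀ x : H, ‖x‖ ≤ ‖T x‖) (n : ℕ) (x : H) :
    ‖x‖ ≤ ‖(T ^ n) x‖ := by
  induction n generalizing x with
  | zero => simp
  | succ n ih =>
    rw [pow_succ, mul_apply_eq_comp]
    exact (hT x).trans (ih (T x))

private lemma sub_lower' (T : H →L[ℂ] H) (hT : ∀ x : H, ‖x‖ ≤ ‖T x‖) (l : ℂ) (x : H) :
    (1 - ‖l‖) * ‖x‖ ≤ ‖(T - l • 1) x‖ := by
  have h1 : (T - l • 1) x = T x - l • x := by simp [sub_apply, smul_apply, one_apply]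
  rw [h1]
  have h2 : ‖T x‖ - ‖l • x‖ ≤ ‖T x - l • x‖ := norm_sub_norm_le _ _
  have h3 := hT x
  rw [norm_smul] at h2
  nlinarith [norm_nonneg x]

private lemma pow_inj' (T : H →L[ℂ] H) (hT : ∀ x : H, ‖x‖ ≤ ‖T x‖) (n : ℕ) {x y : H}
    (h : (T ^ n) x = (T ^ n) y) : x = y := by
  have h1 := pow_lower' T hT n (x - y)
  rw [map_sub, h, sub_self, norm_zero] at h1
  have : ‖x - y‖ = 0 := le_antisymm h1 (norm_nonneg _)
  simpa [sub_eq_zero] using norm_eq_zero.mp this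

/-- Direction 1: membership in all ranges of powers gives membership in range of `T - l`. -/
private lemma mem_range_sub' (T : H →L[ℂ] H) (hT : ∀ x : H, ‖x‖ ≤ ‖T x‖)
    (y : H) (hy : ∀ n : ℕ, ∃ x, (T ^ n) x = y) (l : ℂ) (hl : ‖l‖ < 1) :
    ∃ z, (T - l • 1) z = y := by
  choose x hx using hy
  have hTx : ∀ n, T (x (n + 1)) = x n := by
    intro n
    apply pow_inj' T hT n
    rw [hx n, ← mul_apply_eq_comp, ← pow_succ, hx]
  have hnorm : ∀ n, ‖x n‖ ≤ ‖y‖ := fun n => (hx n) ▸ pow_lower' T hT n (x n)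
  set g : ℕ → H := fun k => l ^ k • x k with hg
  have hsum : Summable g := by
    apply Summable.of_norm_bounded (g := fun k => ‖y‖ * ‖l‖ ^ k)
    · exact (summable_geometric_of_lt_one (norm_nonneg l) hl).mul_left _
    · intro k
      rw [hg]
      simp only [norm_smul, norm_pow]
      calc ‖l‖ ^ k * ‖x k‖ ≤ ‖l‖ ^ k * ‖y‖ :=
            mul_le_mul_of_nonneg_left (hnorm k) (by positivity)
        _ = ‖y‖ * ‖l‖ ^ k := mul_comm _ _
  have hsum' : Summable (fun k => l ^ k • x (k + 1)) := by
    rcases eq_or_ne l 0 with h0 | h0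
    · subst h0
      apply (summable_nat_add_iff 1).1
      apply Summable.of_norm_bounded (g := fun _ => (0:ℝ))
      · exact summable_zero
      · intro k; simp [zero_pow]
    · have heq : (fun k => l ^ k • x (k + 1)) = fun k => l⁻¹ • g (k + 1) := by
        funext k
        rw [hg]; simp only [smul_smul, pow_succ]
        rw [inv_mul_eq_div, mul_div_assoc, div_self h0, mul_one]
      rw [heq]
      exact ((summable_nat_add_iff 1).2 hsum).const_smul _
  refine ⟨∑' k, l ^ k • x (k + 1), ?_⟩
  have hTz : T (∑' k, l ^ k • x (k + 1)) = ∑' k, g k := by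
    rw [T.map_tsum hsum']
    congr 1; funext k
    rw [map_smul, hTx k, hg]
  have hlz : l • (∑' k, l ^ k • x (k + 1)) = ∑' k, g (k + 1) := by
    rw [← Summable.tsum_const_smul l hsum']
    congr 1; funext k
    rw [hg]
    simp only [smul_smul, ← pow_succ']
  rw [sub_apply, smul_apply, one_apply_eq_self, hTz, hlz, hsum.tsum_eq_zero_add]
  have h0 : x 0 = y := by simpa using hx 0
  simp [hg, h0]

/-- The inductive step for direction 2. -/
private lemma step' (T : H →L[ℂ] H) (hT : ∀ x : H, ‖x‖ ≤ ‖T x‖) {ε : ℝ} (hε0 : 0 < ε)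
    (hε1 : ε < 1) (y : H) (hy : ∀ l : ℂ, ‖l‖ < ε → ∃ z, (T - l • 1) z = y) :
    ∃ z, T z = y ∧ ∀ l : ℂ, ‖l‖ < ε → ∃ w, (T - l • 1) w = z := by
  obtain ⟨z₀, hz₀⟩ := hy 0 (by simpa using hε0)
  have hz₀' : T z₀ = y := by
    have : T - (0 : ℂ) • 1 = T := by simp
    rwa [this] at hz₀
  refine ⟨z₀, hz₀', ?_⟩
  have haux : ∀ l : ℂ, l ≠ 0 → ‖l‖ < ε → ∃ u, (T - l • 1) u = z₀ ∧
      T u ∈ LinearMap.range (T : H →ₗ[ℂ] H) ∧ ‖z₀ - T u‖ ≤ ‖l‖ * (‖z₀‖ / (1 - ε)) := by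
    intro l hl0 hl
    obtain ⟨zl, hzl⟩ := hy l hl
    have hzl' : T zl - l • zl = y := by
      have : (T - l • 1) zl = T zl - l • zl := by simp [sub_apply, smul_apply, one_apply]
      rwa [this] at hzl
    set u : H := l⁻¹ • (zl - z₀) with hu
    have hTu : T u = zl := by
      rw [hu, map_smul, map_sub, hz₀']
      have : T zl - y = l • zl := by rw [← hzl', sub_sub_cancel]
      rw [this, smul_smul, inv_mul_cancel₀ hl0, one_smul]
    have hmain : (T - l • 1) u = z₀ := by
      have happ : (T - l • 1) u = T u - l • u := by simp [sub_apply, smul_apply, one_apply]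
      rw [happ, hTu, hu, smul_smul, mul_inv_cancel₀ hl0, one_smul]
      abel
    have hub : ‖u‖ ≤ ‖z₀‖ / (1 - ε) := by
      have h1 := sub_lower' T hT l u
      rw [hmain] at h1
      have h2 : (1 - ε) * ‖u‖ ≤ (1 - ‖l‖) * ‖u‖ :=
        mul_le_mul_of_nonneg_right (by linarith) (norm_nonneg _)
      rw [le_div_iff₀ (by linarith : (0:ℝ) < 1 - ε)]
      calc ‖u‖ * (1 - ε) = (1 - ε) * ‖u‖ := mul_comm _ _
        _ ≤ ‖z₀‖ := h2.trans h1
    refine ⟨u, hmain, ⟨u, rfl⟩, ?_⟩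
    have : z₀ - T u = -(l • u) := by
      rw [hTu]
      have : zl - z₀ = l • u := by rw [hu, smul_smul, mul_inv_cancel₀ hl0, one_smul]
      rw [← this]; abel
    rw [this, norm_neg, norm_smul]
    exact mul_le_mul_of_nonneg_left hub (norm_nonneg _)
  intro l hl
  rcases eq_or_ne l 0 with rfl | hl0
  · suffices hmem : z₀ ∈ LinearMap.range (T : H →ₗ[ℂ] H) by
      obtain ⟨w, hw⟩ := hmem
      refine ⟨w, ?_⟩
      have : T - (0 : ℂ) • 1 = T := by simp
      rw [this]; exact hw
    have hcl : IsClosed (LinearMap.range (T : H →ₗ[ℂ] H) : Set H) :=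
      range_closed' one_pos (by simpa using hT)
    have hclo : z₀ ∈ closure (LinearMap.range (T : H →ₗ[ℂ] H) : Set H) := by
      rw [Metric.mem_closure_iff]
      intro δ hδ
      set C : ℝ := ‖z₀‖ / (1 - ε) + 1 with hC
      have hCpos : 0 < C := by
        have : (0:ℝ) ≤ ‖z₀‖ / (1 - ε) := div_nonneg (norm_nonneg _) (by linarith)
        rw [hC]; linarith
      set r : ℝ := min (ε / 2) (δ / (2 * C)) with hr
      have hrpos : 0 < r := lt_min (by linarith) (by positivity)
      have hrε : r < ε := (min_le_left _ _).trans_lt (by linarith)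
      have hl0' : (r : ℂ) ≠ 0 := by
        simp only [ne_eq, Complex.ofReal_eq_zero]
        exact ne_of_gt hrpos
      have hlnorm : ‖(r : ℂ)‖ < ε := by
        rw [Complex.norm_real, Real.norm_eq_abs, abs_of_pos hrpos]; exact hrε
      obtain ⟨u, _, hmem, hbound⟩ := haux (r : ℂ) hl0' hlnorm
      refine ⟨T u, hmem, ?_⟩
      rw [dist_eq_norm]
      have h1 : ‖(r : ℂ)‖ = r := by
        rw [Complex.norm_real, Real.norm_eq_abs, abs_of_pos hrpos]
      rw [h1] at hbound
      have h2 : r ≤ δ / (2 * C) := min_le_right _ _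
      have h3 : ‖z₀‖ / (1 - ε) ≤ C - 1 := by rw [hC]; ring_nf; linarith
      calc ‖z₀ - T u‖ ≤ r * (‖z₀‖ / (1 - ε)) := hbound
        _ ≤ r * C := mul_le_mul_of_nonneg_left (by linarith) hrpos.le
        _ ≤ (δ / (2 * C)) * C := mul_le_mul_of_nonneg_right h2 hCpos.le
        _ = δ / 2 := by field_simp
        _ < δ := by linarith
    rwa [hcl.closure_eq] at hclo
  · obtain ⟨u, hmain, _, _⟩ := haux l hl0 hl
    exact ⟨u, hmain⟩

/-- Direction 2. -/
private lemma mem_range_pow' (T : H →L[ℂ] H) (hT : ∀ x : H, ‖x‖ ≤ ‖T x‖) {ε : ℝ}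
    (hε0 : 0 < ε) (hε1 : ε < 1) (n : ℕ) :
    ∀ y : H, (∀ l : ℂ, ‖l‖ < ε → ∃ z, (T - l • 1) z = y) → ∃ z, (T ^ n) z = y := by
  induction n with
  | zero => exact fun y _ => ⟨y, by simp⟩
  | succ n ih =>
    intro y hy
    obtain ⟨z, hz, hz'⟩ := step' T hT hε0 hε1 y hy
    obtain ⟨w, hw⟩ := ih z hz'
    exact ⟨w, by rw [pow_succ', mul_apply_eq_comp, hw, hz]⟩

/-- The key identity of submodules. -/
private lemma key' (T : H →L[ℂ] H) (hT : ∀ x : H, ‖x‖ ≤ ‖T x‖) {ε : ℝ} (hε0 : 0 < ε)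
    (hε1 : ε < 1) :
    (⨅ n : ℕ, ⨅ _ : 1 ≤ n, LinearMap.range ((T ^ n : H →L[ℂ] H) : H →ₗ[ℂ] H)) =
      ⨅ l : ℂ, ⨅ _ : ‖l‖ < ε, LinearMap.range ((T - l • 1 : H →L[ℂ] H) : H →ₗ[ℂ] H) := by
  ext y
  simp only [Submodule.mem_iInf, LinearMap.mem_range, ContinuousLinearMap.coe_coe]
  constructor
  · intro h l hl
    refine mem_range_sub' T hT y (fun n => ?_) l (hl.trans hε1)
    rcases Nat.eq_zero_or_pos n with rfl | hn
    · exact ⟨y, by simp⟩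
    · exact h n hn
  · intro h n _
    exact mem_range_pow' T hT hε0 hε1 n y h

end Aux

theorem stmt0 {H : Type*} [NormedAddCommGroup H] [InnerProductSpace ℂ H] [CompleteSpace H]
    (T : H →L[ℂ] H) (hT : ∀ x : H, ‖x‖ ≤ ‖T x‖) (ε : ℝ) (hε0 : 0 < ε) (hε1 : ε < 1) :
    (⨆ n : ℕ, ⨆ _ : 1 ≤ n, LinearMap.ker (((adjoint T) ^ n : H →L[ℂ] H) : H →ₗ[ℂ] H)).topologicalClosure =
      (⨆ l : ℂ, ⨆ _ : ‖l‖ < ε,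
        LinearMap.ker ((adjoint T - (starRingEnd ℂ l) • (1 : H →L[ℂ] H) : H →ₗ[ℂ] H))).topologicalClosure := by
  have horth : ∀ (A : H →L[ℂ] H) (c : ℝ), 0 < c → (∀ x, c * ‖x‖ ≤ ‖A x‖) →
      (LinearMap.ker (adjoint A : H →ₗ[ℂ] H))ᗮ = LinearMap.range (A : H →ₗ[ℂ] H) := by
    intro A c hc h
    rw [ker_adjoint', Submodule.orthogonal_orthogonal_eq_closure]
    exact (range_closed' hc h).submodule_topologicalClosure_eq
  have e1 : ∀ n : ℕ, (LinearMap.ker (((adjoint T) ^ n : H →L[ℂ] H) : H →ₗ[ℂ] H))ᗮ =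
      LinearMap.range ((T ^ n : H →L[ℂ] H) : H →ₗ[ℂ] H) := by
    intro n
    have : (adjoint T) ^ n = adjoint (T ^ n) := by
      rw [← star_eq_adjoint, ← star_eq_adjoint, ← star_pow]
    rw [this]
    exact horth (T ^ n) 1 one_pos (by simpa using pow_lower' T hT n)
  have e2 : ∀ l : ℂ, ‖l‖ < ε →
      (LinearMap.ker ((adjoint T - (starRingEnd ℂ l) • (1 : H →L[ℂ] H) : H →L[ℂ] H) : H →ₗ[ℂ] H))ᗮ =
        LinearMap.range ((T - l • 1 : H →L[ℂ] H) : H →ₗ[ℂ] H) := by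
    intro l hl
    have hadj : adjoint T - (starRingEnd ℂ l) • (1 : H →L[ℂ] H) = adjoint (T - l • 1) := by
      rw [← star_eq_adjoint, ← star_eq_adjoint, star_sub, star_smul, star_one]
      rfl
    rw [hadj]
    exact horth (T - l • 1) (1 - ‖l‖) (by linarith) (sub_lower' T hT l)
  rw [← Submodule.orthogonal_orthogonal_eq_closure, ← Submodule.orthogonal_orthogonal_eq_closure]
  congr 1
  simp only [orth_iSup']
  calc (⨅ n : ℕ, ⨅ _ : 1 ≤ n, (LinearMap.ker (((adjoint T) ^ n : H →L[ℂ] H) : H →ₗ[ℂ] H))ᗮ)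
      = ⨅ n : ℕ, ⨅ _ : 1 ≤ n, LinearMap.range ((T ^ n : H →L[ℂ] H) : H →ₗ[ℂ] H) :=
        iInf_congr fun n => iInf_congr fun _ => e1 n
    _ = ⨅ l : ℂ, ⨅ _ : ‖l‖ < ε, LinearMap.range ((T - l • 1 : H →L[ℂ] H) : H →ₗ[ℂ] H) :=
        key' T hT hε0 hε1
    _ = ⨅ l : ℂ, ⨅ _ : ‖l‖ < ε,
          (LinearMap.ker ((adjoint T - (starRingEnd ℂ l) • (1 : H →L[ℂ] H) : H →L[ℂ] H) :
            H →ₗ[ℂ] H))ᗮ :=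
        iInf_congr fun l => iInf_congr fun hl => (e2 l hl).symm
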